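/- Let X = (I,P) be a probabilistic coherence space and let t : Mfin(I) → [0,∞) satisfy Fun t(x) := Σ_μ t_μ x^μ ≤ 1 for all x ∈ P. Let p ∈ [0,1). Then Fun t is Lipschitz with constant 1/(1−p) on {x ∈ P | ‖x‖_X ≤ p} for the distance d_X: for all x,y ∈ P with ‖x‖_X ≤ p and ‖y‖_X ≤ p, |Fun t(x) − Fun t(y)| ≤ d_X(x,y)/(1−p). -/

import Mathlib

open scoped ENNReal NNReal

noncomputable section

/-- ⟨u,u'⟩ = Σ_i u_i u'_i in [0,∞]. -/
def dotE {I : Type*} (u v : I → ℝ≥0∞) : ℝ≥0∞ := ∑' i, u i * v i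

/-- The orthogonal P⊥ of a set P ⊆ [0,∞]^I. -/
def orthE {I : Type*} (P : Set (I → ℝ≥0∞)) : Set (I → ℝ≥0∞) :=
  {v | ∀ u ∈ P, dotE u v ≤ 1}

/-- (I,P) is a probabilistic coherence space. -/
structure IsPCS {I : Type*} (P : Set (I → ℝ≥0∞)) : Prop where
  biorth : orthE (orthE P) = P
  nonzero : ∀ a, ∃ x ∈ P, 0 < x a
  bounded : ∀ a, ∃ m : ℝ≥0, ∀ x ∈ P, x a ≤ (m : ℝ≥0∞)

/-- The norm ‖x‖_X = inf{r > 0 | x ∈ rP}. -/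
def pnorm {I : Type*} (P : Set (I → ℝ≥0∞)) (x : I → ℝ≥0∞) : ℝ≥0∞ :=
  sInf {r : ℝ≥0∞ | 0 < r ∧ ∃ z ∈ P, x = r • z}

/-- The distance d_X(x,y) = ‖x−(x∧y)‖_X + ‖y−(x∧y)‖_X. -/
def distX {I : Type*} (P : Set (I → ℝ≥0∞)) (x y : I → ℝ≥0∞) : ℝ≥0∞ :=
  pnorm P (x - x ⊓ y) + pnorm P (y - x ⊓ y)

/-- x^μ = Π_{a∈I} x_a^{μ(a)}. -/
def mpow {I : Type*} (x : I → ℝ≥0∞) (μ : Multiset I) : ℝ≥0∞ := (μ.map x).prod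

lemma mpow_mono {I : Type*} {x y : I → ℝ≥0∞} (h : ∀ a, x a ≤ y a) (μ : Multiset I) :
    mpow x μ ≤ mpow y μ := by
  induction μ using Multiset.induction with
  | empty => simp [mpow]
  | cons a μ ih =>
    simp only [mpow, Multiset.map_cons, Multiset.prod_cons] at *
    exact mul_le_mul' (h a) ih

lemma mpow_convex {I : Type*} (w z : I → ℝ≥0∞) {s ε : ℝ≥0∞} (hse : s ≤ ε) (μ : Multiset I) :
    ε * mpow (fun a => w a + s * z a) μ + s * mpow w μ ≤
    s * mpow (fun a => w a + ε * z a) μ + ε * mpow w μ := by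
  induction μ using Multiset.induction with
  | empty => simp [mpow, add_comm]
  | cons a μ ih =>
    have hAC : mpow (fun a => w a + s * z a) μ ≤ mpow (fun a => w a + ε * z a) μ :=
      mpow_mono (fun a => by gcongr) μ
    simp only [mpow, Multiset.map_cons, Multiset.prod_cons] at *
    set A := (μ.map fun a => w a + s * z a).prod with hA
    set B := (μ.map w).prod with hB
    set C := (μ.map fun a => w a + ε * z a).prod with hC
    calc ε * ((w a + s * z a) * A) + s * (w a * B)
        = w a * (ε * A + s * B) + ε * s * (z a * A) := by ring
      _ ≤ w a * (s * C + ε * B) + ε * s * (z a * C) := by gcongr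
      _ = s * ((w a + ε * z a) * C) + ε * (w a * B) := by ring

lemma pcs_dc {I : Type*} {P : Set (I → ℝ≥0∞)} (hP : IsPCS P)
    {u : I → ℝ≥0∞} (hu : u ∈ P) {v : I → ℝ≥0∞} (hv : ∀ a, v a ≤ u a) : v ∈ P := by
  rw [← hP.biorth] at hu ⊢
  intro w hw
  exact le_trans (ENNReal.tsum_le_tsum fun i => mul_le_mul_right (hv i) _) (hu w hw)

lemma pcs_convex {I : Type*} {P : Set (I → ℝ≥0∞)} (hP : IsPCS P)
    {u v : I → ℝ≥0∞} (hu : u ∈ P) (hv : v ∈ P) {q : ℝ≥0∞} (hq : q ≤ 1) :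
    (fun a => q * u a + (1 - q) * v a) ∈ P := by
  rw [← hP.biorth] at hu hv ⊢
  intro w hw
  have h1 : dotE w (fun a => q * u a + (1 - q) * v a)
      = q * dotE w u + (1 - q) * dotE w v := by
    simp only [dotE, mul_add]
    rw [ENNReal.tsum_add, ← ENNReal.tsum_mul_left, ← ENNReal.tsum_mul_left]
    congr 1 <;> exact tsum_congr fun i => by ring
  calc dotE w (fun a => q * u a + (1 - q) * v a)
      = q * dotE w u + (1 - q) * dotE w v := h1
    _ ≤ q * 1 + (1 - q) * 1 := by gcongr <;> [exact hu w hw; exact hv w hw]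
    _ = 1 := by rw [mul_one, mul_one, add_tsub_cancel_of_le hq]

lemma fun_mono {I : Type*} (t : Multiset I → ℝ≥0∞) {x y : I → ℝ≥0∞} (h : ∀ a, x a ≤ y a) :
    (∑' μ : Multiset I, t μ * mpow x μ) ≤ ∑' μ : Multiset I, t μ * mpow y μ :=
  ENNReal.tsum_le_tsum fun μ => mul_le_mul_right (mpow_mono h μ) _

lemma one_side {I : Type*}
    (P : Set (I → ℝ≥0∞)) (hP : IsPCS P)
    (t : Multiset I → ℝ≥0∞)
    (ht : ∀ z ∈ P, ∑' μ : Multiset I, t μ * mpow z μ ≤ 1)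
    (p : ℝ≥0∞) (hp : p < 1)
    (x y : I → ℝ≥0∞) (hx : x ∈ P) (hxp : pnorm P x ≤ p) :
    (∑' μ : Multiset I, t μ * mpow x μ) - (∑' μ : Multiset I, t μ * mpow y μ) ≤
      pnorm P (x - x ⊓ y) / (1 - p) := by
  set w : I → ℝ≥0∞ := x ⊓ y with hw
  set F : (I → ℝ≥0∞) → ℝ≥0∞ := fun z => ∑' μ : Multiset I, t μ * mpow z μ with hF
  have hwx : ∀ a, w a ≤ x a := fun a => inf_le_left
  have hwy : ∀ a, w a ≤ y a := fun a => inf_le_right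
  have hFw_le_Fy : F w ≤ F y := fun_mono t hwy
  have ha1 : F x - F y ≤ 1 := le_trans tsub_le_self (ht x hx)
  have haxw : F x - F y ≤ F x - F w := tsub_le_tsub_left hFw_le_Fy _
  -- key: for all q ∈ (p,1), (F x - F y) * (1 - q) ≤ pnorm P (x - w)
  have key : ∀ q, p < q → q < 1 → (F x - F y) * (1 - q) ≤ pnorm P (x - w) := by
    intro q hpq hq1
    have hq0 : q ≠ 0 := (lt_of_le_of_lt (zero_le : (0:ℝ≥0∞) ≤ p) hpq).ne'
    have hqt : q ≠ ⊤ := (lt_trans hq1 (by norm_num)).ne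
    apply le_sInf
    rintro s ⟨hs0, zu, hzu, hus⟩
    -- representation of x with coefficient < q
    have hsx : sInf {r : ℝ≥0∞ | 0 < r ∧ ∃ z ∈ P, x = r • z} < q := lt_of_le_of_lt hxp hpq
    obtain ⟨r, ⟨hr0, zx, hzx, hxr⟩, hrq⟩ := sInf_lt_iff.mp hsx
    -- w = q • zw with zw ∈ P
    set zw : I → ℝ≥0∞ := fun a => w a / q with hzwdef
    have hwq : ∀ a, w a = q * zw a := by
      intro a
      rw [hzwdef]
      exact (ENNReal.mul_div_cancel hq0 hqt).symm
    have hzwP : zw ∈ P := by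
      apply pcs_dc hP hzx
      intro a
      rw [hzwdef]
      rw [ENNReal.div_le_iff_le_mul (Or.inl hq0) (Or.inl hqt)]
      calc w a ≤ x a := hwx a
        _ = r * zx a := by rw [hxr]; rfl
        _ ≤ zx a * q := by rw [mul_comm]; exact mul_le_mul_right hrq.le _
    set ε : ℝ≥0∞ := 1 - q with hε
    have hε0 : ε ≠ 0 := (tsub_pos_of_lt hq1).ne'
    have hεt : ε ≠ ⊤ := (lt_of_le_of_lt tsub_le_self (by norm_num : (1:ℝ≥0∞) < ⊤)).ne
    rcases le_or_gt ε s with hεs | hsε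
    · calc (F x - F y) * (1 - q) ≤ 1 * ε := mul_le_mul' ha1 le_rfl
        _ = ε := one_mul ε
        _ ≤ s := hεs
    · -- convexity argument
      have hus' : ∀ a, (x - w) a = s * zu a := fun a => by rw [hus]; rfl
      have hxw : ∀ a, x a = w a + s * zu a := by
        intro a
        rw [← hus' a]
        exact (add_tsub_cancel_of_le (hwx a)).symm
      have hgε : (fun a => w a + ε * zu a) ∈ P := by
        have : (fun a => w a + ε * zu a) = fun a => q * zw a + (1 - q) * zu a := by
          funext a; rw [hwq a]
        rw [this]
        exact pcs_convex hP hzwP hzu hq1.le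
      have hconv : ε * F (fun a => w a + s * zu a) + s * F w ≤
          s * F (fun a => w a + ε * zu a) + ε * F w := by
        simp only [hF]
        rw [← ENNReal.tsum_mul_left, ← ENNReal.tsum_mul_left, ← ENNReal.tsum_mul_left,
          ← ENNReal.tsum_mul_left, ← ENNReal.tsum_add, ← ENNReal.tsum_add]
        apply ENNReal.tsum_le_tsum
        intro μ
        have h := mpow_convex w zu hsε.le μ
        calc ε * (t μ * mpow (fun a => w a + s * zu a) μ) + s * (t μ * mpow w μ)
            = t μ * (ε * mpow (fun a => w a + s * zu a) μ + s * mpow w μ) := by ring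
          _ ≤ t μ * (s * mpow (fun a => w a + ε * zu a) μ + ε * mpow w μ) :=
              mul_le_mul_right h _
          _ = s * (t μ * mpow (fun a => w a + ε * zu a) μ) + ε * (t μ * mpow w μ) := by ring
      have hFx : F x = F (fun a => w a + s * zu a) := by
        congr 1; funext a; exact hxw a
      have hFw1 : F w ≤ 1 := ht w (pcs_dc hP hx hwx)
      have hchain : ε * F x + s * F w ≤ s + ε * F w := by
        rw [hFx]
        calc ε * F (fun a => w a + s * zu a) + s * F w
            ≤ s * F (fun a => w a + ε * zu a) + ε * F w := hconv
          _ ≤ s * 1 + ε * F w := by gcongr; exact ht _ hgε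
          _ = s + ε * F w := by rw [mul_one]
      have hεFx : ε * F x ≤ s + ε * F w := le_trans (le_add_right le_rfl) hchain
      -- (F x - F w) * ε ≤ s
      have hFwFx : F w ≤ F x := fun_mono t hwx
      have hεFwt : ε * F w ≠ ⊤ := by
        exact ENNReal.mul_ne_top hεt (lt_of_le_of_lt hFw1 (by norm_num)).ne
      have hsub : (F x - F w) * ε ≤ s := by
        rw [← ENNReal.add_le_add_iff_right hεFwt]
        calc (F x - F w) * ε + ε * F w = (F x - F w + F w) * ε := by ring
          _ = F x * ε := by rw [tsub_add_cancel_of_le hFwFx]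
          _ = ε * F x := mul_comm _ _
          _ ≤ s + ε * F w := hεFx
      calc (F x - F y) * (1 - q) ≤ (F x - F w) * ε := mul_le_mul' haxw le_rfl
        _ ≤ s := hsub
  -- limit q → p
  have hfin : (F x - F y) * (1 - p) ≤ pnorm P (x - w) := by
    apply ENNReal.le_of_forall_pos_le_add
    intro δ hδ _
    set m : ℝ≥0∞ := min (δ : ℝ≥0∞) ((1 - p) / 2) with hm
    have h1p0 : (1:ℝ≥0∞) - p ≠ 0 := (tsub_pos_of_lt hp).ne'
    have h1pt : (1:ℝ≥0∞) - p ≠ ⊤ := (lt_of_le_of_lt tsub_le_self (by norm_num : (1:ℝ≥0∞) < ⊤)).ne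
    have hm0 : 0 < m := lt_min (by exact_mod_cast hδ)
      (ENNReal.div_pos h1p0 (by norm_num : (2:ℝ≥0∞) ≠ ⊤))
    have hpt : p ≠ ⊤ := hp.ne_top
    have hpq : p < p + m := ENNReal.lt_add_right hpt hm0.ne'
    have hq1 : p + m < 1 := by
      calc p + m ≤ p + (1 - p) / 2 := add_le_add_right (min_le_right _ _) p
        _ < p + (1 - p) := (ENNReal.add_lt_add_left hpt (ENNReal.half_lt_self h1p0 h1pt))
        _ = 1 := add_tsub_cancel_of_le hp.le
    have hk := key (p + m) hpq hq1
    calc (F x - F y) * (1 - p)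
        = (F x - F y) * ((1 - (p + m)) + ((p + m) - p)) := by
          rw [tsub_add_tsub_cancel hq1.le hpq.le]
      _ = (F x - F y) * (1 - (p + m)) + (F x - F y) * ((p + m) - p) := by rw [mul_add]
      _ ≤ pnorm P (x - w) + 1 * ((p + m) - p) := by gcongr
      _ = pnorm P (x - w) + m := by rw [one_mul, ENNReal.add_sub_cancel_left hpt]
      _ ≤ pnorm P (x - w) + δ := add_le_add_right (min_le_left _ _) _
  rw [ENNReal.le_div_iff_mul_le (Or.inl (tsub_pos_of_lt hp).ne')
    (Or.inl ((lt_of_le_of_lt tsub_le_self (by norm_num : (1:ℝ≥0∞) < ⊤)).ne))]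
  exact hfin


/-- Lipschitz property: for t : !X ⊸ 1 and p ∈ [0,1), Fun t is Lipschitz with
constant 1/(1−p) on the ball of radius p of P: |Fun t(x) − Fun t(y)| ≤ d_X(x,y)/(1−p)
(stated with the two truncated differences, which together express the absolute
value). -/
theorem stmt12 {I : Type*} [Countable I]
    (P : Set (I → ℝ≥0∞)) (hP : IsPCS P)
    (t : Multiset I → ℝ≥0∞) (htfin : ∀ μ, t μ ≠ ⊤)
    (ht : ∀ z ∈ P, ∑' μ : Multiset I, t μ * mpow z μ ≤ 1)
    (p : ℝ≥0∞) (hp : p < 1)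
    (x y : I → ℝ≥0∞) (hx : x ∈ P) (hy : y ∈ P)
    (hxp : pnorm P x ≤ p) (hyp : pnorm P y ≤ p) :
    (∑' μ : Multiset I, t μ * mpow x μ) - (∑' μ : Multiset I, t μ * mpow y μ) ≤
      distX P x y / (1 - p) ∧
    (∑' μ : Multiset I, t μ * mpow y μ) - (∑' μ : Multiset I, t μ * mpow x μ) ≤
      distX P x y / (1 - p) := by
  constructor
  · calc (∑' μ : Multiset I, t μ * mpow x μ) - (∑' μ : Multiset I, t μ * mpow y μ)
        ≤ pnorm P (x - x ⊓ y) / (1 - p) := one_side P hP t ht p hp x y hx hxp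
    _ ≤ distX P x y / (1 - p) := by unfold distX; gcongr; exact le_self_add
  · calc (∑' μ : Multiset I, t μ * mpow y μ) - (∑' μ : Multiset I, t μ * mpow x μ)
        ≤ pnorm P (y - y ⊓ x) / (1 - p) := one_side P hP t ht p hp y x hy hyp
    _ ≤ distX P x y / (1 - p) := by
        rw [inf_comm]; unfold distX; gcongr; exact le_add_self
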